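/- For x in [-1,1] and n >= 1, |Q_n(x)| = 1 if and only if x = 1, or x = -1, or R_{n-1}(x) = 0, where Q_n and R_{n-1} are as defined by the Chebyshev closed forms Q_n(z) = (1/sqrt(a^2+1))( -(az+i)T_{n-1}(z) + sqrt(a^2+1)(1-z^2)U_{n-2}(z) ) and R_{n-1}(z) = (1/sqrt(a^2+1))( sqrt(a^2+1) z U_{n-2}(z) + a T_{n-1}(z) ). -/

import Mathlib

open Polynomial

/-- On `[-1,1]`, `|Q_n(x)| = 1` iff `x = 1`, `x = -1`, or `R_{n-1}(x) = 0`. -/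
theorem stmt4 (a : ℝ) (ha : a ≠ 0) (n : ℕ) (hn : 1 ≤ n) (x : ℝ)
    (hx : x ∈ Set.Icc (-1 : ℝ) 1) :
    ‖(1 / (Real.sqrt (a ^ 2 + 1) : ℂ)) *
        (-((a : ℂ) * (x : ℂ) + Complex.I) *
            (Polynomial.Chebyshev.T ℂ ((n : ℤ) - 1)).eval (x : ℂ) +
          (Real.sqrt (a ^ 2 + 1) : ℂ) * (1 - (x : ℂ) ^ 2) *
            (Polynomial.Chebyshev.U ℂ ((n : ℤ) - 2)).eval (x : ℂ))‖ = 1 ↔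
      x = 1 ∨ x = -1 ∨
        (1 / Real.sqrt (a ^ 2 + 1)) *
          (Real.sqrt (a ^ 2 + 1) * x * (Polynomial.Chebyshev.U ℝ ((n : ℤ) - 2)).eval x +
            a * (Polynomial.Chebyshev.T ℝ ((n : ℤ) - 1)).eval x) = 0 := by
  obtain ⟨θ, hθ⟩ : ∃ θ : ℝ, Real.cos θ = x :=
    ⟨Real.arccos x, Real.cos_arccos hx.1 hx.2⟩
  set s := Real.sqrt (a ^ 2 + 1) with hs_def
  have hs0 : 0 < s := Real.sqrt_pos.mpr (by positivity)
  have hs2 : s ^ 2 = a ^ 2 + 1 := Real.sq_sqrt (by positivity)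
  set t := (Polynomial.Chebyshev.T ℝ ((n : ℤ) - 1)).eval x with ht_def
  set u := (Polynomial.Chebyshev.U ℝ ((n : ℤ) - 2)).eval x with hu_def
  -- key Chebyshev identity
  have key : t ^ 2 + (1 - x ^ 2) * u ^ 2 = 1 := by
    have h1 : t = Real.cos (((n : ℝ) - 1) * θ) := by
      rw [ht_def, ← hθ, Polynomial.Chebyshev.T_real_cos]; push_cast; ring_nf
    have h2 : u * Real.sin θ = Real.sin (((n : ℝ) - 1) * θ) := by
      rw [hu_def, ← hθ, Polynomial.Chebyshev.U_real_cos]; push_cast; ring_nf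
    have hx2 : 1 - x ^ 2 = Real.sin θ ^ 2 := by
      rw [← hθ, Real.sin_sq]
    have hpy := Real.sin_sq_add_cos_sq (((n : ℝ) - 1) * θ)
    rw [hx2]
    linear_combination (t + Real.cos (((n : ℝ) - 1) * θ)) * h1 +
      (u * Real.sin θ + Real.sin (((n : ℝ) - 1) * θ)) * h2 + hpy
  -- rewrite complex evals as casts of real evals
  have hT : (Polynomial.Chebyshev.T ℂ ((n : ℤ) - 1)).eval (x : ℂ) = (t : ℂ) := by
    rw [ht_def, show ((x : ℂ)) = (algebraMap ℝ ℂ) x from rfl,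
      ← Polynomial.Chebyshev.map_T (algebraMap ℝ ℂ), Polynomial.eval_map,
      Polynomial.eval₂_at_apply]
    rfl
  have hU : (Polynomial.Chebyshev.U ℂ ((n : ℤ) - 2)).eval (x : ℂ) = (u : ℂ) := by
    rw [hu_def, show ((x : ℂ)) = (algebraMap ℝ ℂ) x from rfl,
      ← Polynomial.Chebyshev.map_U (algebraMap ℝ ℂ), Polynomial.eval_map,
      Polynomial.eval₂_at_apply]
    rfl
  rw [hT, hU]
  have hz : (1 / (s : ℂ)) *
      (-((a : ℂ) * (x : ℂ) + Complex.I) * (t : ℂ) +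
        (s : ℂ) * (1 - (x : ℂ) ^ 2) * (u : ℂ)) =
      (((1 / s) * (-(a * x * t) + s * (1 - x ^ 2) * u) : ℝ) : ℂ) +
        ((-(t / s) : ℝ) : ℂ) * Complex.I := by
    have : (s : ℂ) ≠ 0 := by exact_mod_cast hs0.ne'
    field_simp
    push_cast
    field_simp
    ring
  rw [hz, Complex.norm_add_mul_I, Real.sqrt_eq_one]
  -- main algebraic identity
  have main : ((1 / s) * (-(a * x * t) + s * (1 - x ^ 2) * u)) ^ 2 + (-(t / s)) ^ 2 - 1 =
      (x ^ 2 - 1) * (a * t + s * x * u) ^ 2 / s ^ 2 := by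
    field_simp
    nlinarith [key, hs2, sq_nonneg s, sq_nonneg t, sq_nonneg u]
  constructor
  · intro h
    have e : (x ^ 2 - 1) * (a * t + s * x * u) ^ 2 / s ^ 2 = 0 := by
      rw [← main, h]; ring
    rcases div_eq_zero_iff.mp e with h0 | h0
    · rcases mul_eq_zero.mp h0 with h1 | h2
      · have : (x - 1) * (x + 1) = 0 := by ring_nf; linarith [h1]
        rcases mul_eq_zero.mp this with h' | h'
        · exact Or.inl (by linarith)
        · exact Or.inr (Or.inl (by linarith))
      · refine Or.inr (Or.inr ?_)
        have h3 : a * t + s * x * u = 0 :=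
          pow_eq_zero_iff (n := 2) (by norm_num) |>.mp h2
        rw [mul_eq_zero]
        right
        linarith
    · exact absurd h0 (by positivity)
  · intro h
    have h0 : (x ^ 2 - 1) * (a * t + s * x * u) ^ 2 = 0 := by
      rcases h with h | h | h
      · rw [h]; ring
      · rw [h]; ring
      · have h' : s * x * u + a * t = 0 := by
          rcases mul_eq_zero.mp h with h' | h'
          · exact absurd h' (by positivity)
          · exact h'
        have h'' : a * t + s * x * u = 0 := by linarith
        rw [h'']; ring
    have hmain0 : ((1 / s) * (-(a * x * t) + s * (1 - x ^ 2) * u)) ^ 2 + (-(t / s)) ^ 2 - 1 = 0 := by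
      rw [main, h0]; simp
    linarith
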